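/- In any double algebra $A$, the image $L := \Phi_L(A)$ of the map $\Phi_L(a) = a \star e$ is a left ideal of the horizontal algebra $H = (A, \star, i)$ and a unital subalgebra of the vertical algebra $V = (A, \circ, e)$. -/
import Mathlib


/-- A double algebra over a commutative ring `k`: a `k`-module `A` with two
associative unital bilinear multiplications, the vertical `vmul` (written `∘` in the
paper, unit `e`) and the horizontal `hmul` (written `⋆`, unit `i`), satisfying
axioms A1–A8 of Szlachányi's Definition 1.1. -/
structure DoubleAlgebra (k : Type*) (A : Type*) [CommRing k] [AddCommGroup A]
    [Module k A] where
  vmul : A →ₗ[k] A →ₗ[k] A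
  hmul : A →ₗ[k] A →ₗ[k] A
  e : A
  i : A
  vmul_assoc : ∀ a b c, vmul (vmul a b) c = vmul a (vmul b c)
  hmul_assoc : ∀ a b c, hmul (hmul a b) c = hmul a (hmul b c)
  vmul_e : ∀ a, vmul a e = a
  e_vmul : ∀ a, vmul e a = a
  hmul_i : ∀ a, hmul a i = a
  i_hmul : ∀ a, hmul i a = a
  A1 : ∀ a b, vmul (hmul a e) b = hmul (vmul (hmul a e) i) b
  A2 : ∀ a b, vmul a (hmul b e) = hmul (vmul i (hmul b e)) a
  A3 : ∀ a b, hmul (vmul a i) b = vmul (hmul (vmul a i) e) b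
  A4 : ∀ a b, hmul a (vmul b i) = vmul (hmul e (vmul b i)) a
  A5 : ∀ a b, vmul a (hmul e b) = hmul a (vmul i (hmul e b))
  A6 : ∀ a b, vmul (hmul e a) b = hmul b (vmul (hmul e a) i)
  A7 : ∀ a b, hmul a (vmul i b) = vmul a (hmul e (vmul i b))
  A8 : ∀ a b, hmul (vmul i a) b = vmul b (hmul (vmul i a) e)

variable {k A : Type*} [CommRing k] [AddCommGroup A] [Module k A]

/-- `Φ_L(a) = a ⋆ e`. -/
def DoubleAlgebra.PhiL (D : DoubleAlgebra k A) (a : A) : A := D.hmul a D.e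
/-- `Φ_R(a) = e ⋆ a`. -/
def DoubleAlgebra.PhiR (D : DoubleAlgebra k A) (a : A) : A := D.hmul D.e a
/-- `Φ_B(a) = a ∘ i`. -/
def DoubleAlgebra.PhiB (D : DoubleAlgebra k A) (a : A) : A := D.vmul a D.i
/-- `Φ_T(a) = i ∘ a`. -/
def DoubleAlgebra.PhiT (D : DoubleAlgebra k A) (a : A) : A := D.vmul D.i a

/-- `L = Φ_L(A)` is a left ideal of the horizontal algebra `H` and a
unital subalgebra of the vertical algebra `V`. -/
theorem stmt0 (D : DoubleAlgebra k A) :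
    (∀ h x, x ∈ Set.range D.PhiL → D.hmul h x ∈ Set.range D.PhiL) ∧
    D.e ∈ Set.range D.PhiL ∧
    (∀ x y, x ∈ Set.range D.PhiL → y ∈ Set.range D.PhiL →
      D.vmul x y ∈ Set.range D.PhiL) := by
  refine ⟨?_, ⟨D.i, by simp [DoubleAlgebra.PhiL, D.i_hmul]⟩, ?_⟩
  · rintro h x ⟨a, rfl⟩
    exact ⟨D.hmul h a, by simp [DoubleAlgebra.PhiL, D.hmul_assoc]⟩
  · rintro x y ⟨a, rfl⟩ ⟨b, rfl⟩
    refine ⟨D.hmul (D.vmul (D.hmul a D.e) D.i) b, ?_⟩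
    simp only [DoubleAlgebra.PhiL]
    rw [D.hmul_assoc, ← D.A1]
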